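/- The map (P.iv) preserves the Poisson bracket: if φ(w0,w1,w2,w3) = (w1,w2,w3,w4) with w4 defined by the (P.iv) relation, then for all pairs of coordinate functions the pullback identity {w_i ∘ φ, w_j ∘ φ} = {w_i, w_j} ∘ φ holds, where the bracket is {w0,w1}={w1,w2}={w2,w3}=0, {w0,w2}=1/w1, {w1,w3}=1/w2, {w0,w3}=−(w0+2*w1+2*w2+w3+ν)/(w1*w2). -/

import Mathlib

noncomputable def D0 (F : ℝ → ℝ → ℝ → ℝ → ℝ) (w0 w1 w2 w3 : ℝ) : ℝ :=
  deriv (fun t => F t w1 w2 w3) w0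
noncomputable def D1 (F : ℝ → ℝ → ℝ → ℝ → ℝ) (w0 w1 w2 w3 : ℝ) : ℝ :=
  deriv (fun t => F w0 t w2 w3) w1
noncomputable def D2 (F : ℝ → ℝ → ℝ → ℝ → ℝ) (w0 w1 w2 w3 : ℝ) : ℝ :=
  deriv (fun t => F w0 w1 t w3) w2
noncomputable def D3 (F : ℝ → ℝ → ℝ → ℝ → ℝ) (w0 w1 w2 w3 : ℝ) : ℝ :=
  deriv (fun t => F w0 w1 w2 t) w3

noncomputable def pbIv (nu : ℝ) (F G : ℝ → ℝ → ℝ → ℝ → ℝ) (w0 w1 w2 w3 : ℝ) : ℝ :=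
  (1 / w1) * (D0 F w0 w1 w2 w3 * D2 G w0 w1 w2 w3 - D2 F w0 w1 w2 w3 * D0 G w0 w1 w2 w3)
  + (1 / w2) * (D1 F w0 w1 w2 w3 * D3 G w0 w1 w2 w3 - D3 F w0 w1 w2 w3 * D1 G w0 w1 w2 w3)
  + (-(w0 + 2*w1 + 2*w2 + w3 + nu) / (w1 * w2)) * (D0 F w0 w1 w2 w3 * D3 G w0 w1 w2 w3 - D3 F w0 w1 w2 w3 * D0 G w0 w1 w2 w3)

noncomputable def F4 (a b nu w0 w1 w2 w3 : ℝ) : ℝ :=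
  -(w0*w1*w2 + w1*w2*w3 + w1^2*w2 + w2*w3^2 + 2*w1*w2^2 + 2*w2^2*w3 + w2^3 + nu*(w1*w2 + w2*w3 + w2^2) + b*w2 + a) / (w2 * w3)

/-- Coordinate functions on ℝ⁴. -/
noncomputable def coord : Fin 4 → (ℝ → ℝ → ℝ → ℝ → ℝ)
  | 0 => fun x _ _ _ => x
  | 1 => fun _ x _ _ => x
  | 2 => fun _ _ x _ => x
  | 3 => fun _ _ _ x => x

/-- Coordinate functions pulled back by the (P.iv) map φ. -/
noncomputable def coordPhi (a b nu : ℝ) (i : Fin 4) : ℝ → ℝ → ℝ → ℝ → ℝ :=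
  fun w0 w1 w2 w3 => coord i w1 w2 w3 (F4 a b nu w0 w1 w2 w3)

lemma hasDerivAt_quad (A B C x : ℝ) :
    HasDerivAt (fun t : ℝ => A*t^2 + B*t + C) (2*A*x + B) x := by
  have h := (((hasDerivAt_pow 2 x).const_mul A).add
    (((hasDerivAt_id x).const_mul B).add_const C))
  replace h : HasDerivAt (fun i : ℝ => A * i ^ 2 + (B * id i + C))
      (A * (((2:ℕ):ℝ) * x ^ (2 - 1)) + B * 1) x := h
  convert h using 1
  · funext t; simp only [id]; ring
  · simp; ring

lemma dF0 (a b nu w0 w1 w2 w3 : ℝ) (h2 : w2 ≠ 0) (h3 : w3 ≠ 0) :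
    deriv (fun t => F4 a b nu t w1 w2 w3) w0 = -w1/w3 := by
  have key : (fun t => F4 a b nu t w1 w2 w3)
      = fun t : ℝ => 0*t^2 + (-w1/w3)*t +
        (-(w1*w2*w3 + w1^2*w2 + w2*w3^2 + 2*w1*w2^2 + 2*w2^2*w3 + w2^3
          + nu*(w1*w2 + w2*w3 + w2^2) + b*w2 + a) / (w2 * w3)) := by
    funext t; unfold F4; field_simp; ring
  rw [key, (hasDerivAt_quad _ _ _ w0).deriv]; ring

lemma dF1 (a b nu w0 w1 w2 w3 : ℝ) (h2 : w2 ≠ 0) (h3 : w3 ≠ 0) :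
    deriv (fun t => F4 a b nu w0 t w2 w3) w1
      = -(w0 + 2*w1 + 2*w2 + w3 + nu)/w3 := by
  have key : (fun t => F4 a b nu w0 t w2 w3)
      = fun t : ℝ => (-1/w3)*t^2 + (-(w0 + w3 + 2*w2 + nu)/w3)*t +
        (-(w2*w3^2 + 2*w2^2*w3 + w2^3 + nu*(w2*w3 + w2^2) + b*w2 + a) / (w2 * w3)) := by
    funext t; unfold F4; field_simp; ring
  rw [key, (hasDerivAt_quad _ _ _ w1).deriv]
  field_simp; ring

lemma dF3 (a b nu w0 w1 w2 w3 : ℝ) (h2 : w2 ≠ 0) (h3 : w3 ≠ 0) :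
    deriv (fun t => F4 a b nu w0 w1 w2 t) w3
      = -(w1 + 2*w2 + 2*w3 + F4 a b nu w0 w1 w2 w3 + nu)/w3 := by
  set A := w2 with hA
  set B := w1*w2 + 2*w2^2 + nu*w2 with hB
  set C := w0*w1*w2 + w1^2*w2 + 2*w1*w2^2 + w2^3 + nu*(w1*w2 + w2^2) + b*w2 + a with hC
  have key : (fun t => F4 a b nu w0 w1 w2 t)
      = fun t : ℝ => -(A*t^2 + B*t + C) / (w2*t) := by
    funext t; unfold F4; rw [hA, hB, hC]; ring_nf
  have hnum : HasDerivAt (fun t : ℝ => -(A*t^2 + B*t + C)) (-(2*A*w3 + B)) w3 :=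
    (hasDerivAt_quad A B C w3).neg
  have hden : HasDerivAt (fun t : ℝ => w2*t) w2 w3 := by
    simpa using (hasDerivAt_id w3).const_mul w2
  have h := hnum.div hden (by exact mul_ne_zero h2 h3)
  rw [key, show (fun t : ℝ => -(A*t^2 + B*t + C) / (w2*t))
      = (fun t : ℝ => -(A*t^2 + B*t + C)) / (fun t : ℝ => w2*t) from rfl, h.deriv]
  unfold F4
  rw [hA, hB, hC]
  field_simp [show w2 ≠ 0 from h2]
  ring

theorem stmt19 (a b nu w0 w1 w2 w3 : ℝ)
    (h1 : w1 ≠ 0) (h2 : w2 ≠ 0) (h3 : w3 ≠ 0)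
    (h4 : F4 a b nu w0 w1 w2 w3 ≠ 0) :
    ∀ i j : Fin 4,
      pbIv nu (coordPhi a b nu i) (coordPhi a b nu j) w0 w1 w2 w3
        = pbIv nu (coord i) (coord j) w1 w2 w3 (F4 a b nu w0 w1 w2 w3) := by
  intro i j
  have hd0 : D0 (coordPhi a b nu 3) w0 w1 w2 w3 = -w1/w3 := dF0 a b nu w0 w1 w2 w3 h2 h3
  have hd1 : D1 (coordPhi a b nu 3) w0 w1 w2 w3 = -(w0 + 2*w1 + 2*w2 + w3 + nu)/w3 :=
    dF1 a b nu w0 w1 w2 w3 h2 h3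
  have hd3 : D3 (coordPhi a b nu 3) w0 w1 w2 w3
      = -(w1 + 2*w2 + 2*w3 + F4 a b nu w0 w1 w2 w3 + nu)/w3 := dF3 a b nu w0 w1 w2 w3 h2 h3
  fin_cases i <;> fin_cases j <;>
    simp only [pbIv, D0, D1, D2, D3, coordPhi, coord] at hd0 hd1 hd3 ⊢ <;>
    simp only [deriv_const, deriv_id'', hd0, hd1, hd3] <;> field_simp <;> ring
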